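/- Let $H$ be a finite abelian group, $I(H)$ its subgroup of elements of order dividing $2$, and $n_2(H) = [H : I(H)]$. If $S \subseteq H$ is an $S_2$-set with $|S| = k'$, then $|H| \geq \left(1 - \frac{1}{n_2(H)+1}\right)(k'^2 - 3k' + 2)$. -/

import Mathlib

open Finset

section SidonAux

variable {H : Type*} [AddCommGroup H] [DecidableEq H]

/-- The Sidon property used in the statement. -/
def SidonProp (S : Finset H) : Prop :=
  ∀ d1 ∈ S, ∀ d2 ∈ S, ∀ d3 ∈ S, ∀ d4 ∈ S, d1 ≠ d2 → d3 ≠ d4 →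
    d1 + d2 = d3 + d4 → (d1 = d3 ∧ d2 = d4) ∨ (d1 = d4 ∧ d2 = d3)

/-- Two distinct representations of the same difference force a shift by `±x`. -/
lemma sidon_key {S : Finset H} (hS : SidonProp S) {x u w : H} (hx : x ≠ 0)
    (hu : u ∈ S) (hu' : u - x ∈ S) (hw : w ∈ S) (hw' : w - x ∈ S) (hne : u ≠ w) :
    w = u + x ∨ w = u - x := by
  by_contra hc
  push_neg at hc
  obtain ⟨h1, h2⟩ := hc
  have hsum : u + (w - x) = w + (u - x) := by abel
  have hd12 : u ≠ w - x := by
    intro h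
    exact h1 (by rw [h]; abel)
  rcases hS u hu (w - x) hw' w hw (u - x) hu' hd12 h2 hsum with ⟨h, _⟩ | ⟨h, _⟩
  · exact hne h
  · exact hx (sub_eq_self.mp h.symm)

/-- For a nonzero involution `x`, the number of representations of `x` as a difference
is at most 2. -/
lemma sidon_N_le_two_of_inv {S : Finset H} (hS : SidonProp S) {x : H}
    (hx2 : x + x = 0) (hx : x ≠ 0) :
    (S.filter fun u => u - x ∈ S).card ≤ 2 := by
  by_contra hc
  push_neg at hc
  obtain ⟨a, b, c, ha, hb, hcm, hab, hac, hbc⟩ := Finset.two_lt_card_iff.mp hc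
  simp only [mem_filter] at ha hb hcm
  have hnegx : -x = x := neg_eq_of_add_eq_zero_left hx2
  have hsub : ∀ t : H, t - x = t + x := by
    intro t; rw [sub_eq_add_neg, hnegx]
  have hb' : b = a + x := by
    rcases sidon_key hS hx ha.1 ha.2 hb.1 hb.2 hab with h | h
    · exact h
    · rw [hsub] at h; exact h
  have hc' : c = a + x := by
    rcases sidon_key hS hx ha.1 ha.2 hcm.1 hcm.2 hac with h | h
    · exact h
    · rw [hsub] at h; exact h
  exact hbc (hb'.trans hc'.symm)

/-- For `x` with `x + x ≠ 0`, the number of representations of `x` as a difference is at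
most one more than the number of 3-term progressions with common difference `x`. -/
lemma sidon_N_le_one_add_A {S : Finset H} (hS : SidonProp S) {x : H}
    (hx2 : x + x ≠ 0) :
    (S.filter fun u => u - x ∈ S).card ≤
      1 + (S.filter fun v => v - x ∈ S ∧ v + x ∈ S).card := by
  have hx : x ≠ 0 := by intro h; exact hx2 (by rw [h, add_zero])
  set R := S.filter fun u : H => u - x ∈ S with hR
  set C := S.filter fun v : H => v - x ∈ S ∧ v + x ∈ S with hC
  by_cases h2 : 2 < R.card
  · obtain ⟨a, b, c, ha, hb, hcm, hab, hac, hbc⟩ := Finset.two_lt_card_iff.mp h2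
    rw [hR, mem_filter] at ha hb hcm
    have kb := sidon_key hS hx ha.1 ha.2 hb.1 hb.2 hab
    have kc := sidon_key hS hx ha.1 ha.2 hcm.1 hcm.2 hac
    -- b and c are a+x and a-x in some order
    have hpm : (a + x ∈ S ∧ a + x - x ∈ S) ∧ (a - x ∈ S ∧ a - x - x ∈ S) := by
      rcases kb with h | h <;> rcases kc with h' | h'
      · exact absurd (h.trans h'.symm) hbc
      · refine ⟨⟨?_, ?_⟩, ⟨?_, ?_⟩⟩ <;> rw [← h] at * <;> rw [← h'] at * <;>
          first
            | exact hb.1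
            | exact hb.2
            | exact hcm.1
            | exact hcm.2
      · refine ⟨⟨?_, ?_⟩, ⟨?_, ?_⟩⟩ <;> rw [← h'] at * <;> rw [← h] at * <;>
          first
            | exact hb.1
            | exact hb.2
            | exact hcm.1
            | exact hcm.2
      · exact absurd (h.trans h'.symm) hbc
    -- from key applied to a+x and a-x we get 3x = 0
    have hne2 : a + x ≠ a - x := by
      intro h
      apply hx2
      calc x + x = (a + x) - (a - x) := by abel
        _ = 0 := by rw [h]; abel
    have k3 := sidon_key hS hx hpm.1.1 hpm.1.2 hpm.2.1 hpm.2.2 hne2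
    have h3x : x + x + x = 0 := by
      rcases k3 with h | h
      · calc x + x + x = (a + x + x) - (a - x) := by abel
          _ = 0 := by rw [← h]; abel
      · exfalso
        exact hx (sub_eq_self.mp (h.trans (by abel : a + x - x = a)))
    have e1 : a + x + x = a - x := by
      rw [← sub_eq_zero]
      calc a + x + x - (a - x) = x + x + x := by abel
        _ = 0 := h3x
    have e2 : a - x - x = a + x := by
      rw [← sub_eq_zero]
      calc a - x - x - (a + x) = -(x + x + x) := by abel
        _ = 0 := by rw [h3x, neg_zero]
    -- C contains a, a+x, a-x
    have haC : a ∈ C := by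
      rw [hC, mem_filter]
      exact ⟨ha.1, ha.2, hpm.1.1⟩
    have hapC : a + x ∈ C := by
      rw [hC, mem_filter]
      refine ⟨hpm.1.1, ?_, ?_⟩
      · have : a + x - x = a := by abel
        rw [this]; exact ha.1
      · rw [e1]; exact hpm.2.1
    have hamC : a - x ∈ C := by
      rw [hC, mem_filter]
      refine ⟨hpm.2.1, ?_, ?_⟩
      · rw [e2]; exact hpm.1.1
      · have : a - x + x = a := by abel
        rw [this]; exact ha.1
    have hCge : 2 < C.card := by
      rw [Finset.two_lt_card_iff]
      refine ⟨a, a + x, a - x, haC, hapC, hamC, ?_, ?_, hne2⟩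
      · intro h; exact hx (by rwa [left_eq_add] at h)
      · intro h
        apply hx
        have : a - (a - x) = 0 := by rw [← h]; abel
        rwa [show a - (a - x) = x by abel] at this
    -- R ⊆ {a, a+x, a-x}
    have hRsub : R ⊆ {a, a + x, a - x} := by
      intro t ht
      rw [hR, mem_filter] at ht
      simp only [mem_insert, mem_singleton]
      by_cases hta : t = a
      · exact Or.inl hta
      · rcases sidon_key hS hx ha.1 ha.2 ht.1 ht.2 (Ne.symm hta) with h | h
        · exact Or.inr (Or.inl h)
        · exact Or.inr (Or.inr h)
    have hR3 : R.card ≤ 3 := by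
      refine (Finset.card_le_card hRsub).trans ?_
      refine (Finset.card_insert_le _ _).trans ?_
      have := Finset.card_insert_le (a + x) ({a - x} : Finset H)
      simp only [Finset.card_singleton] at this
      omega
    omega
  · push_neg at h2
    by_cases h1 : R.card ≤ 1
    · omega
    · push_neg at h1
      obtain ⟨u, hu, w, hw, huw⟩ := Finset.one_lt_card.mp h1
      rw [hR, mem_filter] at hu hw
      have hCne : 0 < C.card := by
        rcases sidon_key hS hx hu.1 hu.2 hw.1 hw.2 huw with h | h
        · refine Finset.card_pos.mpr ⟨u, ?_⟩
          rw [hC, mem_filter]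
          exact ⟨hu.1, hu.2, by rw [← h]; exact hw.1⟩
        · refine Finset.card_pos.mpr ⟨w, ?_⟩
          rw [hC, mem_filter]
          refine ⟨hw.1, hw.2, ?_⟩
          have : w + x = u := by rw [h]; abel
          rw [this]; exact hu.1
      omega

/-- For each `v`, there are at most two non-involution `x` with `v ± x ∈ S`. -/
lemma sidon_T_le_two {S : Finset H} [Fintype H] (hS : SidonProp S) (v : H) :
    ((univ.filter fun x : H => ¬x + x = 0).filter
      fun x => v - x ∈ S ∧ v + x ∈ S).card ≤ 2 := by
  set T := (univ.filter fun x : H => ¬x + x = 0).filter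
      fun x => v - x ∈ S ∧ v + x ∈ S with hT
  have hmem : ∀ x ∈ T, ¬x + x = 0 ∧ v - x ∈ S ∧ v + x ∈ S := by
    intro x hx
    rw [hT, mem_filter, mem_filter] at hx
    exact ⟨hx.1.2, hx.2⟩
  have hkey : ∀ x ∈ T, ∀ y ∈ T, y = x ∨ y = -x := by
    intro x hx y hy
    by_cases hxy : y = x
    · exact Or.inl hxy
    obtain ⟨hx2, hxm, hxp⟩ := hmem x hx
    obtain ⟨hy2, hym, hyp⟩ := hmem y hy
    have hsum : (v + x) + (v - x) = (v + y) + (v - y) := by abel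
    have hne1 : v + x ≠ v - x := by
      intro h
      apply hx2
      calc x + x = (v + x) - (v - x) := by abel
        _ = 0 := by rw [h]; abel
    have hne2 : v + y ≠ v - y := by
      intro h
      apply hy2
      calc y + y = (v + y) - (v - y) := by abel
        _ = 0 := by rw [h]; abel
    rcases hS (v + x) hxp (v - x) hxm (v + y) hyp (v - y) hym hne1 hne2 hsum with
      ⟨h, _⟩ | ⟨h, _⟩
    · exact absurd (add_left_cancel h).symm hxy
    · right
      have : x = -y := by
        have := h
        rw [sub_eq_add_neg] at this
        exact add_left_cancel this
      rw [this, neg_neg]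
  by_contra hc
  push_neg at hc
  obtain ⟨a, b, c, ha, hb, hcm, hab, hac, hbc⟩ := Finset.two_lt_card_iff.mp hc
  have hb' : b = -a := (hkey a ha b hb).resolve_left hab.symm
  have hc' : c = -a := (hkey a ha c hcm).resolve_left hac.symm
  exact hbc (hb'.trans hc'.symm)

/-- The total difference count. -/
lemma sidon_sum_N {S : Finset H} [Fintype H] :
    ∑ x : H, (S.filter fun u => u - x ∈ S).card = S.card * S.card := by
  have h1 : ∀ x : H, (S.filter fun u => u - x ∈ S).card =
      ∑ u ∈ S, if u - x ∈ S then 1 else 0 := by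
    intro x; rw [Finset.card_filter]
  simp only [h1]
  rw [Finset.sum_comm]
  have h2 : ∀ u ∈ S, (∑ x : H, if u - x ∈ S then 1 else 0) = S.card := by
    intro u _
    rw [← Finset.card_filter]
    have : (univ.filter fun x : H => u - x ∈ S) = S.image fun s => u - s := by
      ext x
      simp only [mem_filter, mem_univ, true_and, mem_image]
      constructor
      · intro h
        exact ⟨u - x, h, by abel⟩
      · rintro ⟨s, hs, rfl⟩
        rwa [sub_sub_cancel]
    rw [this, Finset.card_image_of_injective _ sub_right_injective]
  rw [Finset.sum_congr rfl h2, Finset.sum_const, smul_eq_mul]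

end SidonAux

theorem stmt_18 (H : Type*) [AddCommGroup H] [Fintype H]
    (S : Finset H) (k' : ℕ) (hk : S.card = k')
    (hS2 : ∀ d1 ∈ S, ∀ d2 ∈ S, ∀ d3 ∈ S, ∀ d4 ∈ S, d1 ≠ d2 → d3 ≠ d4 →
        d1 + d2 = d3 + d4 → (d1 = d3 ∧ d2 = d4) ∨ (d1 = d4 ∧ d2 = d3)) :
    let I : AddSubgroup H :=
      AddMonoidHom.ker (AddMonoidHom.mk' (fun x : H => 2 • x) (by intro a b; simp [smul_add]))
    let n2 : ℕ := I.index
    (Fintype.card H : ℚ) ≥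
      (1 - 1 / ((n2 : ℚ) + 1)) * ((k' : ℚ) ^ 2 - 3 * (k' : ℚ) + 2) := by
  classical
  intro I n2
  subst hk
  have hS : SidonProp S := hS2
  set k := S.card with hk
  set N : H → ℕ := fun x => (S.filter fun u => u - x ∈ S).card with hN
  set Iset : Finset H := univ.filter fun x : H => x + x = 0 with hIset
  set e : ℕ := (Iset.erase 0).card with he
  set f : ℕ := (univ.filter fun x : H => ¬x + x = 0).card with hf
  -- total count
  have htot : ∑ x : H, N x = k * k := sidon_sum_N
  -- split over Iset and its complement
  have hsplit : ∑ x : H, N x =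
      ∑ x ∈ Iset, N x + ∑ x ∈ univ.filter (fun x : H => ¬x + x = 0), N x := by
    rw [hIset]
    exact (Finset.sum_filter_add_sum_filter_not univ _ N).symm
  -- sum over Iset
  have h0mem : (0 : H) ∈ Iset := by
    rw [hIset, mem_filter]
    exact ⟨mem_univ _, by rw [add_zero]⟩
  have hN0 : N 0 = k := by
    rw [hN, hk]
    simp only [sub_zero]
    rw [Finset.filter_true_of_mem fun u hu => hu]
  have hIsum : ∑ x ∈ Iset, N x ≤ k + 2 * e := by
    have hb : ∀ x ∈ Iset.erase 0, N x ≤ 2 := by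
      intro x hx
      rw [Finset.mem_erase] at hx
      have hx2 : x + x = 0 := by
        have := hx.2
        rw [hIset, mem_filter] at this
        exact this.2
      exact sidon_N_le_two_of_inv hS hx2 hx.1
    have h2 : ∑ x ∈ Iset.erase 0, N x ≤ 2 * e := by
      calc ∑ x ∈ Iset.erase 0, N x ≤ (Iset.erase 0).card • 2 :=
            Finset.sum_le_card_nsmul _ _ _ hb
        _ = 2 * e := by rw [smul_eq_mul, ← he, mul_comm]
    calc ∑ x ∈ Iset, N x = N 0 + ∑ x ∈ Iset.erase 0, N x :=
          (Finset.add_sum_erase Iset N h0mem).symm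
      _ = k + ∑ x ∈ Iset.erase 0, N x := by rw [hN0]
      _ ≤ k + 2 * e := Nat.add_le_add_left h2 k
  have hCsum : ∑ x ∈ univ.filter (fun x : H => ¬x + x = 0), N x ≤ f + 2 * k := by
    have step1 : ∑ x ∈ univ.filter (fun x : H => ¬x + x = 0), N x ≤
        ∑ x ∈ univ.filter (fun x : H => ¬x + x = 0),
          (1 + (S.filter fun v => v - x ∈ S ∧ v + x ∈ S).card) := by
      refine Finset.sum_le_sum ?_
      intro x hx
      rw [mem_filter] at hx
      exact sidon_N_le_one_add_A hS hx.2
    have step2 : ∑ x ∈ univ.filter (fun x : H => ¬x + x = 0),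
        (1 + (S.filter fun v => v - x ∈ S ∧ v + x ∈ S).card) =
        f + ∑ x ∈ univ.filter (fun x : H => ¬x + x = 0),
          (S.filter fun v => v - x ∈ S ∧ v + x ∈ S).card := by
      rw [Finset.sum_add_distrib, Finset.sum_const, smul_eq_mul, mul_one, hf]
    have step3 : ∑ x ∈ univ.filter (fun x : H => ¬x + x = 0),
        (S.filter fun v => v - x ∈ S ∧ v + x ∈ S).card ≤ 2 * k := by
      have hswap : ∑ x ∈ univ.filter (fun x : H => ¬x + x = 0),
          (S.filter fun v => v - x ∈ S ∧ v + x ∈ S).card =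
          ∑ v ∈ S, ((univ.filter fun x : H => ¬x + x = 0).filter
            fun x => v - x ∈ S ∧ v + x ∈ S).card := by
        simp only [Finset.card_filter]
        rw [Finset.sum_comm]
      rw [hswap]
      calc ∑ v ∈ S, ((univ.filter fun x : H => ¬x + x = 0).filter
            fun x => v - x ∈ S ∧ v + x ∈ S).card ≤ S.card • 2 :=
            Finset.sum_le_card_nsmul _ _ _ (fun v _ => sidon_T_le_two hS v)
        _ = 2 * k := by rw [smul_eq_mul, ← hk, mul_comm]
    omega
  -- cardinality relations
  have hcard : Iset.card + f = Fintype.card H := by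
    rw [hIset, hf, Finset.card_filter_add_card_filter_not, Finset.card_univ]
  have hIe : e + 1 = Iset.card := by
    rw [he]
    exact Finset.card_erase_add_one h0mem
  have hImem : ∀ x : H, x ∈ I ↔ x + x = 0 := by
    intro x
    refine Iff.trans AddMonoidHom.mem_ker ?_
    show 2 • x = 0 ↔ x + x = 0
    rw [two_nsmul]
  have hIcard : Nat.card I = Iset.card := by
    calc Nat.card I = Fintype.card I := Nat.card_eq_fintype_card
      _ = Fintype.card {x : H // x + x = 0} :=
          Fintype.card_congr (Equiv.subtypeEquivRight hImem)
      _ = (univ.filter fun x : H => x + x = 0).card := Fintype.card_subtype _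
      _ = Iset.card := by rw [hIset]
  have hidx : n2 * Iset.card = Fintype.card H := by
    rw [← hIcard]
    have := AddSubgroup.index_mul_card (G := H) I
    rwa [Nat.card_eq_fintype_card (α := H)] at this
  have hn2ne : n2 ≠ 0 := AddSubgroup.index_ne_zero_of_finite
  -- the main counting inequality in ℕ
  have hmain : k * k ≤ (k + 2 * e) + (f + 2 * k) := by
    calc k * k = ∑ x : H, N x := htot.symm
      _ = _ := hsplit
      _ ≤ (k + 2 * e) + (f + 2 * k) := Nat.add_le_add hIsum hCsum
  -- now finish in ℚ
  have hXle : (k : ℚ) ^ 2 - 3 * k + 2 ≤ (Fintype.card H : ℚ) + ((e : ℚ) + 1) := by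
    have h1 : ((Fintype.card H : ℕ) : ℚ) = (e : ℚ) + 1 + f := by
      have : e + 1 + f = Fintype.card H := by rw [hIe]; exact hcard
      exact_mod_cast this.symm
    have h2 : (k : ℚ) * k ≤ (k : ℚ) + 2 * e + ((f : ℚ) + 2 * k) := by
      exact_mod_cast hmain
    have h3 : (k : ℚ) ^ 2 = (k : ℚ) * k := sq (k : ℚ)
    rw [h1]
    linarith
  have hcn : (n2 : ℚ) * ((e : ℚ) + 1) = (Fintype.card H : ℚ) := by
    have : ((n2 * (e + 1) : ℕ) : ℚ) = ((Fintype.card H : ℕ) : ℚ) := by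
      exact_mod_cast congrArg (Nat.cast (R := ℚ)) (by rw [hIe]; exact hidx)
    push_cast at this
    linarith [this]
  have hn2one : (1 : ℚ) ≤ (n2 : ℚ) := by
    exact_mod_cast Nat.one_le_iff_ne_zero.mpr hn2ne
  have hpos : (0 : ℚ) < (n2 : ℚ) + 1 := by linarith
  have h5 : (n2 : ℚ) * ((k : ℚ) ^ 2 - 3 * k + 2) ≤
      (n2 : ℚ) * ((Fintype.card H : ℚ) + ((e : ℚ) + 1)) :=
    mul_le_mul_of_nonneg_left hXle (by linarith)
  have h6 : (n2 : ℚ) * ((Fintype.card H : ℚ) + ((e : ℚ) + 1)) =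
      (Fintype.card H : ℚ) * ((n2 : ℚ) + 1) := by
    rw [mul_add, hcn]; ring
  have key : (n2 : ℚ) * ((k : ℚ) ^ 2 - 3 * k + 2) ≤
      (Fintype.card H : ℚ) * ((n2 : ℚ) + 1) := h6 ▸ h5
  rw [ge_iff_le]
  have heq : (1 - 1 / ((n2 : ℚ) + 1)) * ((k : ℚ) ^ 2 - 3 * (k : ℚ) + 2) =
      (n2 : ℚ) * ((k : ℚ) ^ 2 - 3 * k + 2) / ((n2 : ℚ) + 1) := by
    field_simp
    ring
  rw [heq, div_le_iff₀ hpos]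
  exact key
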